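/- (Halperin) Let L1, …, L_k be complete subspaces of a Hilbert space H, with orthogonal projections P1, …, P_k onto them respectively, and let P be the orthogonal projection onto the intersection L1 ∩ ⋯ ∩ L_k. Then for every x ∈ H, the sequence ((P1 ∘ P2 ∘ ⋯ ∘ P_k)^n x) converges to P x as n → ∞. -/

import Mathlib

open scoped InnerProductSpace

namespace Stmt13Aux

variable {H : Type*} [NormedAddCommGroup H] [InnerProductSpace ℝ H]

noncomputable def comp (l : List (H →L[ℝ] H)) : H →L[ℝ] H :=
  l.foldr (fun p q => p.comp q) (ContinuousLinearMap.id ℝ H)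

@[simp] lemma comp_nil : comp ([] : List (H →L[ℝ] H)) = ContinuousLinearMap.id ℝ H := rfl

@[simp] lemma comp_cons (p : H →L[ℝ] H) (l : List (H →L[ℝ] H)) :
    comp (p :: l) = p.comp (comp l) := rfl

lemma comp_append (l₁ l₂ : List (H →L[ℝ] H)) :
    comp (l₁ ++ l₂) = (comp l₁).comp (comp l₂) := by
  induction l₁ with
  | nil => simp [comp]
  | cons p l ih =>
      simp only [List.cons_append, comp_cons, ih, ContinuousLinearMap.comp_assoc]

lemma coe_comp_eq (l : List (H →L[ℝ] H)) :
    (l.map (fun p : H →L[ℝ] H => ⇑p)).foldr (· ∘ ·) id = ⇑(comp l) := by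
  induction l with
  | nil => rfl
  | cons p l ih =>
      funext y
      simp only [List.map_cons, List.foldr_cons, Function.comp_apply, ih, comp_cons,
        ContinuousLinearMap.comp_apply]

lemma norm_comp_le (l : List (H →L[ℝ] H))
    (hl : ∀ p ∈ l, ∀ y : H, ‖p y‖ ≤ ‖y‖) (y : H) : ‖comp l y‖ ≤ ‖y‖ := by
  induction l with
  | nil => simp
  | cons p l ih =>
      simp only [comp_cons, ContinuousLinearMap.comp_apply]
      exact le_trans (hl p List.mem_cons_self _)
        (ih (fun q hq => hl q (List.mem_cons_of_mem _ hq)))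

lemma comp_fixed (l : List (H →L[ℝ] H)) (y : H) (h : ∀ p ∈ l, p y = y) :
    comp l y = y := by
  induction l with
  | nil => rfl
  | cons p l ih =>
      simp only [comp_cons, ContinuousLinearMap.comp_apply]
      rw [ih (fun q hq => h q (List.mem_cons_of_mem _ hq)), h p List.mem_cons_self]

lemma fixed_of_norm_comp_eq (l : List (H →L[ℝ] H))
    (hl : ∀ p ∈ l, ∀ y : H, ‖p y‖ ≤ ‖y‖)
    (hfix : ∀ p ∈ l, ∀ y : H, ‖p y‖ = ‖y‖ → p y = y)
    (y : H) (h : ‖comp l y‖ = ‖y‖) : ∀ p ∈ l, p y = y := by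
  induction l with
  | nil => simp
  | cons p l ih =>
      have h1 : ∀ q ∈ l, ∀ y : H, ‖q y‖ ≤ ‖y‖ := fun q hq => hl q (List.mem_cons_of_mem _ hq)
      have h2 : ∀ q ∈ l, ∀ y : H, ‖q y‖ = ‖y‖ → q y = y :=
        fun q hq => hfix q (List.mem_cons_of_mem _ hq)
      have hle : ‖comp l y‖ ≤ ‖y‖ := norm_comp_le l h1 y
      simp only [comp_cons, ContinuousLinearMap.comp_apply] at h
      have hle2 : ‖p (comp l y)‖ ≤ ‖comp l y‖ := hl p List.mem_cons_self _
      have heq : ‖comp l y‖ = ‖y‖ := le_antisymm hle (by rw [← h]; exact hle2)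
      have hly : ∀ q ∈ l, q y = y := ih h1 h2 heq
      have hcy : comp l y = y := comp_fixed l y hly
      intro q hq
      rcases List.mem_cons.mp hq with rfl | hq'
      · rw [hcy] at h
        exact hfix q List.mem_cons_self y h
      · exact hly q hq'

lemma inner_comp (l : List (H →L[ℝ] H))
    (hsa : ∀ p ∈ l, ∀ a b : H, ⟪p a, b⟫_ℝ = ⟪a, p b⟫_ℝ) :
    ∀ a b : H, ⟪comp l a, b⟫_ℝ = ⟪a, comp l.reverse b⟫_ℝ := by
  induction l with
  | nil => intro a b; rfl
  | cons p l ih =>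
      intro a b
      simp only [comp_cons, ContinuousLinearMap.comp_apply, List.reverse_cons]
      rw [hsa p List.mem_cons_self (comp l a) b,
        ih (fun q hq => hsa q (List.mem_cons_of_mem _ hq)) a (p b),
        comp_append]
      simp [comp_cons, comp_nil]

lemma norm_comp_sub_le (l : List (H →L[ℝ] H))
    (hl : ∀ p ∈ l, ∀ y : H, ‖p y‖ ≤ ‖y‖)
    (hstep : ∀ p ∈ l, ∀ y : H, ‖p y - y‖ ^ 2 ≤ ‖y‖ ^ 2 - ‖p y‖ ^ 2) (y : H) :
    ‖comp l y - y‖ ≤ l.length * Real.sqrt (‖y‖ ^ 2 - ‖comp l y‖ ^ 2) := by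
  induction l with
  | nil => simp
  | cons p l ih =>
      have h1 : ∀ q ∈ l, ∀ y : H, ‖q y‖ ≤ ‖y‖ := fun q hq => hl q (List.mem_cons_of_mem _ hq)
      have h2 : ∀ q ∈ l, ∀ y : H, ‖q y - y‖ ^ 2 ≤ ‖y‖ ^ 2 - ‖q y‖ ^ 2 :=
        fun q hq => hstep q (List.mem_cons_of_mem _ hq)
      simp only [comp_cons, ContinuousLinearMap.comp_apply, List.length_cons]
      set w := comp l y with hw
      have hwy : ‖w‖ ≤ ‖y‖ := norm_comp_le l h1 y
      have hpw : ‖p w‖ ≤ ‖w‖ := hl p List.mem_cons_self w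
      have key1 : ‖p w - w‖ ≤ Real.sqrt (‖y‖ ^ 2 - ‖p w‖ ^ 2) := by
        have := hstep p List.mem_cons_self w
        calc ‖p w - w‖ = Real.sqrt (‖p w - w‖ ^ 2) := (Real.sqrt_sq (norm_nonneg _)).symm
          _ ≤ Real.sqrt (‖y‖ ^ 2 - ‖p w‖ ^ 2) := by
              apply Real.sqrt_le_sqrt; nlinarith [norm_nonneg w, norm_nonneg y]
      have key2 : ‖w - y‖ ≤ l.length * Real.sqrt (‖y‖ ^ 2 - ‖p w‖ ^ 2) := by
        refine le_trans (ih h1 h2) ?_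
        have : Real.sqrt (‖y‖ ^ 2 - ‖w‖ ^ 2) ≤ Real.sqrt (‖y‖ ^ 2 - ‖p w‖ ^ 2) := by
          apply Real.sqrt_le_sqrt; nlinarith [norm_nonneg (p w), norm_nonneg w]
        exact mul_le_mul_of_nonneg_left this (Nat.cast_nonneg _)
      calc ‖p w - y‖ ≤ ‖p w - w‖ + ‖w - y‖ := norm_sub_le_norm_sub_add_norm_sub _ _ _
        _ ≤ Real.sqrt (‖y‖ ^ 2 - ‖p w‖ ^ 2) + l.length * Real.sqrt (‖y‖ ^ 2 - ‖p w‖ ^ 2) :=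
            add_le_add key1 key2
        _ = (l.length + 1 : ℝ) * Real.sqrt (‖y‖ ^ 2 - ‖p w‖ ^ 2) := by ring
        _ = ((l.length + 1 : ℕ) : ℝ) * Real.sqrt (‖y‖ ^ 2 - ‖p w‖ ^ 2) := by push_cast; ring

lemma iterate_linear (T : H →L[ℝ] H) (n : ℕ) (a b : H) :
    (⇑T)^[n] (a - b) = (⇑T)^[n] a - (⇑T)^[n] b := by
  induction n with
  | zero => rfl
  | succ n ih => simp [Function.iterate_succ_apply', ih, map_sub]

lemma iterate_norm_le (T : H →L[ℝ] H) (hT : ∀ y : H, ‖T y‖ ≤ ‖y‖) (n : ℕ) (y : H) :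
    ‖(⇑T)^[n] y‖ ≤ ‖y‖ := by
  induction n with
  | zero => simp
  | succ n ih => rw [Function.iterate_succ_apply']; exact le_trans (hT _) ih

end Stmt13Aux

/-- Halperin: Let `P 0, …, P (k-1)` be the orthogonal projections of a
real Hilbert space `H` onto complete subspaces `L 0, …, L (k-1)`, and let `Pinf` be the
orthogonal projection onto the intersection `⨅ i, L i`. Then for every `x ∈ H`, the
iterates `(P 0 ∘ P 1 ∘ ⋯ ∘ P (k-1))^n x` converge to `Pinf x`. -/
theorem stmt_13 {H : Type*} [NormedAddCommGroup H] [InnerProductSpace ℝ H] [CompleteSpace H]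
    {k : ℕ} (L : Fin k → Submodule ℝ H) [∀ i, CompleteSpace (L i)]
    (P : Fin k → H →L[ℝ] H)
    (hPmem : ∀ i, ∀ y : H, P i y ∈ L i)
    (hPorth : ∀ i, ∀ y : H, ∀ z ∈ L i, ⟪y - P i y, z⟫_ℝ = 0)
    (Pinf : H →L[ℝ] H)
    (hPinfmem : ∀ y : H, Pinf y ∈ ⨅ i, L i)
    (hPinforth : ∀ y : H, ∀ z ∈ ⨅ i, L i, ⟪y - Pinf y, z⟫_ℝ = 0)
    (x : H) :
    Filter.Tendsto
      (fun n => ((List.ofFn fun i => (fun y => P i y)).foldr (· ∘ ·) id)^[n] x)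
      Filter.atTop (nhds (Pinf x)) := by
  classical
  open Stmt13Aux in
  -- basic facts about each projection
  have hpyth : ∀ i, ∀ y : H, ‖P i y‖ ^ 2 + ‖y - P i y‖ ^ 2 = ‖y‖ ^ 2 := by
    intro i y
    have h0 : ⟪y - P i y, P i y⟫_ℝ = 0 := hPorth i y _ (hPmem i y)
    have : ‖(y - P i y) + P i y‖ ^ 2 = ‖y - P i y‖ ^ 2 + 2 * ⟪y - P i y, P i y⟫_ℝ + ‖P i y‖ ^ 2 :=
      norm_add_sq_real _ _
    rw [sub_add_cancel, h0] at this
    linarith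
  have hnorm_le : ∀ i, ∀ y : H, ‖P i y‖ ≤ ‖y‖ := by
    intro i y
    have := hpyth i y
    nlinarith [norm_nonneg (P i y), norm_nonneg y, sq_nonneg ‖y - P i y‖]
  have hnorm_eq : ∀ i, ∀ y : H, ‖P i y‖ = ‖y‖ → P i y = y := by
    intro i y h
    have := hpyth i y
    rw [h] at this
    have : ‖y - P i y‖ ^ 2 = 0 := by linarith
    have : y - P i y = 0 := by
      have := pow_eq_zero_iff (n := 2) (by norm_num) |>.mp this
      exact norm_eq_zero.mp this
    rw [← sub_eq_zero, ← neg_sub, neg_eq_zero]; exact this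
  have hidem : ∀ i, ∀ y : H, y ∈ L i → P i y = y := by
    intro i y hy
    have hmem : y - P i y ∈ L i := Submodule.sub_mem _ hy (hPmem i y)
    have := hPorth i y _ hmem
    have : y - P i y = 0 := inner_self_eq_zero.mp this
    rw [← sub_eq_zero, ← neg_sub, neg_eq_zero]; exact this
  have hsa : ∀ i, ∀ a b : H, ⟪P i a, b⟫_ℝ = ⟪a, P i b⟫_ℝ := by
    intro i a b
    have h1 : ⟪P i a, b - P i b⟫_ℝ = 0 := by
      rw [real_inner_comm]; exact hPorth i b _ (hPmem i a)
    have h2 : ⟪a - P i a, P i b⟫_ℝ = 0 := hPorth i a _ (hPmem i b)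
    have e1 : ⟪P i a, b⟫_ℝ = ⟪P i a, P i b⟫_ℝ := by
      have := inner_sub_right (𝕜 := ℝ) (P i a) b (P i b)
      rw [h1] at this; linarith
    have e2 : ⟪a, P i b⟫_ℝ = ⟪P i a, P i b⟫_ℝ := by
      have := inner_sub_left (𝕜 := ℝ) a (P i a) (P i b)
      rw [h2] at this; linarith
    rw [e1, e2]
  have hstep : ∀ i, ∀ y : H, ‖P i y - y‖ ^ 2 ≤ ‖y‖ ^ 2 - ‖P i y‖ ^ 2 := by
    intro i y
    rw [norm_sub_rev]
    have := hpyth i y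
    linarith
  -- the list of projections and its composition
  set l : List (H →L[ℝ] H) := List.ofFn P with hldef
  have hmem_l : ∀ p ∈ l, ∃ i, P i = p := by
    intro p hp
    rw [hldef, List.mem_ofFn] at hp
    exact hp
  have hl_le : ∀ p ∈ l, ∀ y : H, ‖p y‖ ≤ ‖y‖ := by
    intro p hp y; obtain ⟨i, rfl⟩ := hmem_l p hp; exact hnorm_le i y
  have hl_eq : ∀ p ∈ l, ∀ y : H, ‖p y‖ = ‖y‖ → p y = y := by
    intro p hp y; obtain ⟨i, rfl⟩ := hmem_l p hp; exact hnorm_eq i y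
  have hl_sa : ∀ p ∈ l, ∀ a b : H, ⟪p a, b⟫_ℝ = ⟪a, p b⟫_ℝ := by
    intro p hp; obtain ⟨i, rfl⟩ := hmem_l p hp; exact hsa i
  have hl_step : ∀ p ∈ l, ∀ y : H, ‖p y - y‖ ^ 2 ≤ ‖y‖ ^ 2 - ‖p y‖ ^ 2 := by
    intro p hp; obtain ⟨i, rfl⟩ := hmem_l p hp; exact hstep i
  set T : H →L[ℝ] H := Stmt13Aux.comp l with hTdef
  -- identify the function in the statement with ⇑T
  have hfun : ((List.ofFn fun i => (fun y => P i y)).foldr (· ∘ ·) id) = ⇑T := by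
    rw [hTdef, ← Stmt13Aux.coe_comp_eq, hldef]
    congr 1
    rw [List.map_ofFn]
    rfl
  rw [hfun]
  have hTnorm : ∀ y : H, ‖T y‖ ≤ ‖y‖ := Stmt13Aux.norm_comp_le l hl_le
  -- asymptotic regularity: ‖T^[n+1] y - T^[n] y‖ → 0 for every y
  have hasreg : ∀ y : H, Filter.Tendsto
      (fun n => ‖(⇑T)^[n+1] y - (⇑T)^[n] y‖) Filter.atTop (nhds 0) := by
    intro y
    set d : ℕ → ℝ := fun n => ‖(⇑T)^[n] y‖ ^ 2 with hd
    have hdanti : Antitone d := by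
      apply antitone_nat_of_succ_le
      intro n
      have : ‖(⇑T)^[n+1] y‖ ≤ ‖(⇑T)^[n] y‖ := by
        rw [Function.iterate_succ_apply']; exact hTnorm _
      simp only [hd]
      exact pow_le_pow_left₀ (norm_nonneg _) this 2
    have hdbdd : BddBelow (Set.range d) :=
      ⟨0, by rintro _ ⟨n, rfl⟩; positivity⟩
    have hdlim : Filter.Tendsto d Filter.atTop (nhds (⨅ n, d n)) :=
      tendsto_atTop_ciInf hdanti hdbdd
    have hdiff : Filter.Tendsto (fun n => d n - d (n + 1)) Filter.atTop (nhds 0) := by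
      have h2 : Filter.Tendsto (fun n => d (n + 1)) Filter.atTop (nhds (⨅ n, d n)) :=
        hdlim.comp (Filter.tendsto_add_atTop_nat 1)
      simpa using hdlim.sub h2
    have hbound : ∀ n, ‖(⇑T)^[n+1] y - (⇑T)^[n] y‖ ≤ (l.length : ℝ) * Real.sqrt (d n - d (n+1)) := by
      intro n
      have := Stmt13Aux.norm_comp_sub_le l hl_le hl_step ((⇑T)^[n] y)
      rw [← hTdef] at this
      simpa [hd, Function.iterate_succ_apply'] using this
    have hrhs : Filter.Tendsto (fun n => (l.length : ℝ) * Real.sqrt (d n - d (n+1)))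
        Filter.atTop (nhds 0) := by
      have hs : Filter.Tendsto (fun n => Real.sqrt (d n - d (n+1))) Filter.atTop (nhds 0) := by
        have := (Real.continuous_sqrt.tendsto 0).comp hdiff
        simpa [Function.comp_def] using this
      simpa using hs.const_mul (l.length : ℝ)
    exact squeeze_zero (fun n => norm_nonneg _) hbound hrhs
  -- T^[n] v → 0 for v in the range of (1 - T)
  have hran : ∀ z : H, Filter.Tendsto (fun n => (⇑T)^[n] (z - T z)) Filter.atTop (nhds 0) := by
    intro z
    have : ∀ n, (⇑T)^[n] (z - T z) = (⇑T)^[n] z - (⇑T)^[n+1] z := by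
      intro n
      rw [Stmt13Aux.iterate_linear, Function.iterate_succ_apply]
    have h := hasreg z
    rw [tendsto_zero_iff_norm_tendsto_zero]
    simp only [this]
    simpa [norm_sub_rev] using h
  -- the fixed subspace
  set F : Submodule ℝ H := ⨅ i, L i with hF
  have hfixF : ∀ w : H, T w = w → w ∈ F := by
    intro w hw
    have heq : ‖T w‖ = ‖w‖ := by rw [hw]
    have := Stmt13Aux.fixed_of_norm_comp_eq l hl_le hl_eq w heq
    rw [hF, Submodule.mem_iInf]
    intro i
    have hPi : P i ∈ l := by rw [hldef, List.mem_ofFn]; exact ⟨i, rfl⟩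
    have := this (P i) hPi
    rw [← this]; exact hPmem i w
  have hFfix : ∀ w : H, w ∈ F → T w = w := by
    intro w hw
    apply Stmt13Aux.comp_fixed
    intro p hp
    obtain ⟨i, rfl⟩ := hmem_l p hp
    exact hidem i w (Submodule.mem_iInf _ |>.mp hw i)
  -- the range of 1 - T
  set R : Submodule ℝ H := LinearMap.range ((1 - T : H →L[ℝ] H) : H →ₗ[ℝ] H) with hR
  have hRorth : Rᗮ ≤ F := by
    intro w hw
    rw [Submodule.mem_orthogonal] at hw
    set T' : H →L[ℝ] H := Stmt13Aux.comp l.reverse with hT'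
    have hadj : ∀ a b : H, ⟪T a, b⟫_ℝ = ⟪a, T' b⟫_ℝ := by
      intro a b
      exact Stmt13Aux.inner_comp l hl_sa a b
    have hkey : ∀ z : H, ⟪z, w - T' w⟫_ℝ = 0 := by
      intro z
      have hz : (z - T z) ∈ R := ⟨z, rfl⟩
      have := hw _ hz
      have h1 : ⟪z - T z, w⟫_ℝ = ⟪z, w⟫_ℝ - ⟪z, T' w⟫_ℝ := by
        rw [inner_sub_left, hadj]
      rw [inner_sub_right]
      rw [this] at h1
      linarith
    have : w - T' w = 0 := by
      have := hkey (w - T' w)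
      exact inner_self_eq_zero.mp this
    have hT'w : T' w = w := by rw [← sub_eq_zero, ← neg_sub, neg_eq_zero]; exact this
    -- w is fixed by all projections (via the reversed list)
    have hl_le' : ∀ p ∈ l.reverse, ∀ y : H, ‖p y‖ ≤ ‖y‖ := by
      intro p hp; exact hl_le p (List.mem_reverse.mp hp)
    have hl_eq' : ∀ p ∈ l.reverse, ∀ y : H, ‖p y‖ = ‖y‖ → p y = y := by
      intro p hp; exact hl_eq p (List.mem_reverse.mp hp)
    have heq : ‖T' w‖ = ‖w‖ := by rw [hT'w]
    have hfix := Stmt13Aux.fixed_of_norm_comp_eq l.reverse hl_le' hl_eq' w heq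
    rw [hF, Submodule.mem_iInf]
    intro i
    have hPi : P i ∈ l.reverse := by
      rw [List.mem_reverse, hldef, List.mem_ofFn]; exact ⟨i, rfl⟩
    have := hfix (P i) hPi
    rw [← this]; exact hPmem i w
  -- x - Pinf x lies in the closure of the range of 1 - T
  set u : H := Pinf x with hu
  set v : H := x - Pinf x with hv
  have hvF : v ∈ Fᗮ := by
    rw [Submodule.mem_orthogonal]
    intro z hz
    rw [real_inner_comm]
    exact hPinforth x z hz
  have hvcl : v ∈ closure (R : Set H) := by
    have h1 : Fᗮ ≤ Rᗮᗮ := Submodule.orthogonal_le hRorth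
    have h2 : Rᗮᗮ = R.topologicalClosure := Submodule.orthogonal_orthogonal_eq_closure R
    have : v ∈ R.topologicalClosure := h2 ▸ h1 hvF
    exact this
  -- T^[n] v → 0
  have hv0 : Filter.Tendsto (fun n => (⇑T)^[n] v) Filter.atTop (nhds 0) := by
    rw [tendsto_zero_iff_norm_tendsto_zero]
    rw [NormedAddCommGroup.tendsto_atTop]
    intro ε hε
    obtain ⟨w, hwR, hwv⟩ : ∃ w ∈ (R : Set H), ‖v - w‖ < ε / 2 := by
      have := Metric.mem_closure_iff.mp hvcl (ε / 2) (by linarith)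
      obtain ⟨w, hw1, hw2⟩ := this
      exact ⟨w, hw1, by rwa [dist_eq_norm] at hw2⟩
    obtain ⟨z, hz⟩ := hwR
    have hz' : w = z - T z := by rw [← hz]; rfl
    have hw0 : Filter.Tendsto (fun n => (⇑T)^[n] w) Filter.atTop (nhds 0) := by
      rw [hz']; exact hran z
    rw [tendsto_zero_iff_norm_tendsto_zero, NormedAddCommGroup.tendsto_atTop] at hw0
    obtain ⟨N, hN⟩ := hw0 (ε / 2) (by linarith)
    refine ⟨N, fun n hn => ?_⟩
    have h1 : ‖(⇑T)^[n] v - (⇑T)^[n] w‖ ≤ ‖v - w‖ := by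
      rw [← Stmt13Aux.iterate_linear]
      exact Stmt13Aux.iterate_norm_le T hTnorm n _
    have h2 : ‖(⇑T)^[n] w‖ < ε / 2 := by
      have := hN n hn
      rwa [sub_zero, Real.norm_eq_abs, abs_of_nonneg (norm_nonneg _)] at this
    have : ‖(⇑T)^[n] v‖ ≤ ‖(⇑T)^[n] v - (⇑T)^[n] w‖ + ‖(⇑T)^[n] w‖ := by
      have := norm_add_le ((⇑T)^[n] v - (⇑T)^[n] w) ((⇑T)^[n] w)
      simpa using this
    rw [sub_zero, Real.norm_eq_abs, abs_of_nonneg (norm_nonneg _)]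
    calc ‖(⇑T)^[n] v‖ ≤ ‖(⇑T)^[n] v - (⇑T)^[n] w‖ + ‖(⇑T)^[n] w‖ := this
      _ ≤ ‖v - w‖ + ‖(⇑T)^[n] w‖ := by linarith
      _ < ε / 2 + ε / 2 := by linarith
      _ = ε := by ring
  -- conclude
  have hufix : T u = u := hFfix u (hPinfmem x)
  have huit : ∀ n, (⇑T)^[n] u = u := fun n => Function.iterate_fixed hufix n
  have hdecomp : ∀ n, (⇑T)^[n] x = u + (⇑T)^[n] v := by
    intro n
    have : (⇑T)^[n] v = (⇑T)^[n] x - (⇑T)^[n] u := Stmt13Aux.iterate_linear T n x u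
    rw [this, huit]
    abel
  simp only [hdecomp]
  have : Filter.Tendsto (fun n => u + (⇑T)^[n] v) Filter.atTop (nhds (u + 0)) :=
    tendsto_const_nhds.add hv0
  simpa using this
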